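/- Let n = k·l with k, l ≥ 1, and let X be an ℝⁿ-valued random vector with law P (a probability measure on ℝⁿ ≅ (ℝˡ)ᵏ), admitting a density with respect to Lebesgue measure, and assume KL(P ‖ N(0,Iₙ)) < ∞. Write X = (X̄₁, …, X̄ₖ) in blocks of l consecutive coordinates; let P̄ᵢ be the law of the block X̄ᵢ, let P̄ᵢⱼ (1 ≤ j ≤ l) be the law of the j-th coordinate of X̄ᵢ, and let ⊗ⱼP̄ᵢⱼ be the product of the within-block one-dimensional marginals on ℝˡ. Then KL(P ‖ N(0,Iₙ)) = KL(P ‖ ⊗ᵢ₌₁ᵏ P̄ᵢ) + Σᵢ₌₁ᵏ KL(P̄ᵢ ‖ ⊗ⱼ₌₁ˡ P̄ᵢⱼ) + Σᵢ₌₁ᵏ Σⱼ₌₁ˡ KL(P̄ᵢⱼ ‖ N(0,1)), where all three summands are non-negative. -/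

import Mathlib

open MeasureTheory Real ENNReal

/-- Kullback–Leibler divergence `KL(P‖Q)`, valued in `ℝ≥0∞`:
`∫ log(dP/dQ) dP` when `P ≪ Q` (and the log-likelihood ratio is integrable), `∞` otherwise. -/
noncomputable def klDiv {X : Type*} [MeasurableSpace X] (P Q : Measure X) : ℝ≥0∞ :=
  open scoped Classical in
  if P ≪ Q ∧ Integrable (fun x => Real.log (P.rnDeriv Q x).toReal) P then
    ENNReal.ofReal (∫ x, Real.log (P.rnDeriv Q x).toReal ∂P)
  else ⊤

/-- Standard Gaussian `N(0, Iₙ)` on `ℝⁿ`, as the product of `n` standard Gaussians on `ℝ`. -/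
noncomputable def stdGaussian (n : ℕ) : Measure (Fin n → ℝ) :=
  Measure.pi fun _ => ProbabilityTheory.gaussianReal 0 1

section Aux

variable {α : Type*} [MeasurableSpace α]

lemma klDiv_eq {P Q : Measure α} (h1 : P ≪ Q) (h2 : Integrable (llr P Q) P) :
    klDiv P Q = ENNReal.ofReal (∫ x, llr P Q x ∂P) := by
  rw [klDiv, if_pos ⟨h1, h2⟩]
  rfl

lemma klDiv_of_ne_top {P Q : Measure α} (h : klDiv P Q ≠ ⊤) :
    P ≪ Q ∧ Integrable (llr P Q) P := by
  rw [klDiv] at h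
  split_ifs at h with hc
  · exact hc
  · exact absurd rfl h

instance stdGaussian_isProbabilityMeasure (n : ℕ) :
    IsProbabilityMeasure (stdGaussian n) := by
  unfold stdGaussian; infer_instance

/-- Product of one-variable functions integrated against a product measure. -/
lemma lintegral_pi_prod {n : ℕ} {E : Fin n → Type*} [∀ i, MeasurableSpace (E i)]
    (μ : ∀ i, Measure (E i)) [∀ i, SigmaFinite (μ i)]
    (f : ∀ i, E i → ℝ≥0∞) (hf : ∀ i, Measurable (f i)) :
    ∫⁻ x, ∏ i, f i (x i) ∂Measure.pi μ = ∏ i, ∫⁻ y, f i y ∂μ i := by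
  induction n with
  | zero =>
      simp [Measure.pi_of_empty]
  | succ n ih =>
      have h := ((measurePreserving_piFinSuccAbove μ 0).symm)
      rw [← h.lintegral_comp_emb (MeasurableEquiv.measurableEmbedding _)]
      simp_rw [MeasurableEquiv.piFinSuccAbove_symm_apply, Fin.insertNthEquiv,
        Fin.prod_univ_succ, Fin.insertNth_zero]
      simp only [Fin.zero_succAbove, cast_eq, Equiv.coe_fn_mk, Fin.cons_zero, Fin.cons_succ]
      have hgm : Measurable fun y : ∀ j : Fin n, E j.succ => ∏ j, f j.succ (y j) :=
        Finset.measurable_prod Finset.univ fun j _ =>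
          (hf j.succ).comp (measurable_pi_apply j)
      have hkey : ∫⁻ a : E 0 × ((j : Fin n) → E j.succ),
          f 0 a.1 * ∏ j : Fin n, f j.succ (a.2 j)
            ∂(μ 0).prod (Measure.pi fun j : Fin n => μ j.succ)
          = (∫⁻ y, f 0 y ∂μ 0) *
            ∫⁻ y : (j : Fin n) → E j.succ, ∏ j : Fin n, f j.succ (y j)
              ∂(Measure.pi fun j : Fin n => μ j.succ) :=
        lintegral_prod_mul (hf 0).aemeasurable hgm.aemeasurable
      exact hkey.trans (by rw [ih (fun j => μ j.succ) (fun j => f j.succ) (fun j => hf j.succ)])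

/-- `withDensity` commutes with finite products. -/
lemma pi_withDensity {n : ℕ} {E : Fin n → Type*} [∀ i, MeasurableSpace (E i)]
    (ν : ∀ i, Measure (E i)) [∀ i, IsProbabilityMeasure (ν i)]
    (f : ∀ i, E i → ℝ≥0∞) (hf : ∀ i, Measurable (f i))
    [∀ i, SigmaFinite ((ν i).withDensity (f i))] :
    Measure.pi (fun i => (ν i).withDensity (f i))
      = (Measure.pi ν).withDensity (fun x => ∏ i, f i (x i)) := by
  refine Measure.pi_eq fun s hs => ?_
  rw [withDensity_apply _ (MeasurableSet.univ_pi hs)]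
  have hind : ∀ x : ∀ i, E i,
      (Set.pi Set.univ s).indicator (fun x => ∏ i, f i (x i)) x
        = ∏ i, (s i).indicator (f i) (x i) := by
    intro x
    by_cases hx : x ∈ Set.pi Set.univ s
    · rw [Set.indicator_of_mem hx]
      exact Finset.prod_congr rfl fun i _ =>
        (Set.indicator_of_mem (hx i (Set.mem_univ i)) _).symm
    · rw [Set.indicator_of_notMem hx]
      rw [Set.mem_univ_pi] at hx
      push_neg at hx
      obtain ⟨i, hi⟩ := hx
      exact (Finset.prod_eq_zero (Finset.mem_univ i)
        (Set.indicator_of_notMem hi _)).symm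
  rw [← lintegral_indicator (MeasurableSet.univ_pi hs) _, lintegral_congr hind,
    lintegral_pi_prod ν _ (fun i => (hf i).indicator (hs i))]
  exact Finset.prod_congr rfl fun i _ =>
    (lintegral_indicator (hs i) (f i)).trans (withDensity_apply _ (hs i)).symm

/-- Radon–Nikodym derivative of a product of probability measures. -/
lemma rnDeriv_pi {n : ℕ} {E : Fin n → Type*} [∀ i, MeasurableSpace (E i)]
    (μ ν : ∀ i, Measure (E i)) [∀ i, IsProbabilityMeasure (μ i)]
    [∀ i, IsProbabilityMeasure (ν i)] (hac : ∀ i, μ i ≪ ν i) :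
    (Measure.pi μ).rnDeriv (Measure.pi ν)
      =ᵐ[Measure.pi ν] fun x => ∏ i, (μ i).rnDeriv (ν i) (x i) := by
  have h1 : ∀ i, (ν i).withDensity ((μ i).rnDeriv (ν i)) = μ i :=
    fun i => Measure.withDensity_rnDeriv_eq _ _ (hac i)
  haveI : ∀ i, SigmaFinite ((ν i).withDensity ((μ i).rnDeriv (ν i))) := fun i => by
    rw [h1 i]; infer_instance
  have h2 : Measure.pi μ
      = (Measure.pi ν).withDensity (fun x => ∏ i, (μ i).rnDeriv (ν i) (x i)) := by
    rw [← pi_withDensity ν _ (fun i => Measure.measurable_rnDeriv _ _)]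
    exact congrArg Measure.pi (funext fun i => (h1 i).symm)
  have hmeas : Measurable fun x : ∀ i, E i => ∏ i, (μ i).rnDeriv (ν i) (x i) :=
    Finset.measurable_prod Finset.univ fun i _ =>
      (Measure.measurable_rnDeriv _ _).comp (measurable_pi_apply i)
  exact (Measure.eq_rnDeriv hmeas Measure.MutuallySingular.zero_left
    (by rw [zero_add]; exact h2)).symm

lemma absolutelyContinuous_withDensity_of {μ ν : Measure α} {G : α → ℝ≥0∞}
    (hG : Measurable G) (hμν : μ ≪ ν) (h0 : μ {x | G x = 0} = 0) :
    μ ≪ ν.withDensity G := by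
  refine Measure.AbsolutelyContinuous.mk fun s hs h => ?_
  rw [withDensity_apply _ hs] at h
  have hzero : G =ᵐ[ν.restrict s] 0 := (lintegral_eq_zero_iff hG).mp h
  have hsetm : MeasurableSet {x | G x ≠ 0} := (hG (measurableSet_singleton 0)).compl
  have hν : ν ({x | G x ≠ 0} ∩ s) = 0 := by
    have h' : (ν.restrict s) {x | G x ≠ 0} = 0 := by
      have h'' := ae_iff.mp hzero
      simpa using h''
    rwa [Measure.restrict_apply hsetm] at h'
  have hμ : μ ({x | G x ≠ 0} ∩ s) = 0 := hμν hν
  have hsub : s ⊆ ({x | G x ≠ 0} ∩ s) ∪ {x | G x = 0} := by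
    intro x hx
    by_cases hGx : G x = 0
    · exact Or.inr hGx
    · exact Or.inl ⟨hGx, hx⟩
  exact le_antisymm (le_trans (measure_mono hsub)
    (le_trans (measure_union_le _ _) (by rw [hμ, h0, add_zero]))) (zero_le)

/-- The negative part of the log-likelihood ratio is always integrable. -/
lemma integrable_negPart_llr (μ ν : Measure α) [IsProbabilityMeasure μ]
    [IsProbabilityMeasure ν] (hμν : μ ≪ ν) :
    Integrable (fun x => max (-(llr μ ν x)) 0) μ := by
  have hmeas : Measurable fun x => max (-(llr μ ν x)) 0 :=
    (measurable_llr μ ν).neg.max measurable_const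
  refine ⟨hmeas.aestronglyMeasurable, ?_⟩
  have hnonneg : 0 ≤ᵐ[μ] fun x => max (-(llr μ ν x)) 0 :=
    Filter.Eventually.of_forall fun x => le_max_right _ _
  rw [hasFiniteIntegral_iff_ofReal hnonneg]
  have hbound : ∀ x, μ.rnDeriv ν x * ENNReal.ofReal (max (-(llr μ ν x)) 0) ≤ 1 := by
    intro x
    set t := μ.rnDeriv ν x with ht_def
    by_cases ht : t = ∞
    · simp [llr, ← ht_def, ht]
    by_cases ht0 : t = 0
    · simp [ht0]
    set r := t.toReal with hr_def
    have hr : 0 < r := ENNReal.toReal_pos ht0 ht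
    have hllr : llr μ ν x = Real.log r := rfl
    by_cases hr1 : 1 ≤ r
    · have : max (-(Real.log r)) 0 = 0 :=
        max_eq_right (neg_nonpos.mpr (Real.log_nonneg hr1))
      simp [hllr, this]
    · push_neg at hr1
      have hlog : -(Real.log r) ≤ r⁻¹ - 1 := by
        rw [← Real.log_inv]
        exact Real.log_le_sub_one_of_pos (inv_pos.mpr hr)
      have h0max : max (-(Real.log r)) 0 ≤ r⁻¹ - 1 := by
        refine max_le hlog ?_
        have : 1 ≤ r⁻¹ := (one_le_inv₀ hr).mpr hr1.le
        linarith
      calc t * ENNReal.ofReal (max (-(llr μ ν x)) 0)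
          ≤ ENNReal.ofReal r * ENNReal.ofReal (r⁻¹ - 1) := by
            rw [hllr]
            exact mul_le_mul' (by rw [← ENNReal.ofReal_toReal ht])
              (ENNReal.ofReal_le_ofReal h0max)
        _ = ENNReal.ofReal (r * (r⁻¹ - 1)) := (ENNReal.ofReal_mul hr.le).symm
        _ = ENNReal.ofReal (1 - r) := by
            rw [mul_sub, mul_inv_cancel₀ hr.ne', mul_one]
        _ ≤ 1 := by
            rw [← ENNReal.ofReal_one]
            exact ENNReal.ofReal_le_ofReal (by linarith)
  calc ∫⁻ x, ENNReal.ofReal (max (-(llr μ ν x)) 0) ∂μ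
      = ∫⁻ x, ENNReal.ofReal (max (-(llr μ ν x)) 0)
          ∂(ν.withDensity (μ.rnDeriv ν)) := by
        rw [Measure.withDensity_rnDeriv_eq _ _ hμν]
    _ = ∫⁻ x, (μ.rnDeriv ν * fun x => ENNReal.ofReal (max (-(llr μ ν x)) 0)) x ∂ν := by
        rw [lintegral_withDensity_eq_lintegral_mul ν (Measure.measurable_rnDeriv _ _)
          hmeas.ennreal_ofReal]
    _ ≤ ∫⁻ _, 1 ∂ν := lintegral_mono fun x => hbound x
    _ < ∞ := by simp

/-- Gibbs' inequality: the KL integrand integrates to a nonnegative number. -/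
lemma integral_llr_nonneg (μ ν : Measure α) [IsProbabilityMeasure μ]
    [IsProbabilityMeasure ν] (hμν : μ ≪ ν) (h : Integrable (llr μ ν) μ) :
    0 ≤ ∫ x, llr μ ν x ∂μ := by
  have hint : Integrable (fun x => 1 - (ν.rnDeriv μ x).toReal) μ :=
    (integrable_const 1).sub Measure.integrable_toReal_rnDeriv
  have hle : (fun x => 1 - (ν.rnDeriv μ x).toReal) ≤ᵐ[μ] llr μ ν := by
    filter_upwards [exp_neg_llr hμν] with x hx
    have h1 := Real.add_one_le_exp (-(llr μ ν x))
    rw [hx] at h1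
    linarith
  have h2 : ∫ x, (1 - (ν.rnDeriv μ x).toReal) ∂μ ≤ ∫ x, llr μ ν x ∂μ :=
    integral_mono_ae hint h hle
  have h3 : ∫ x, (1 - (ν.rnDeriv μ x).toReal) ∂μ
      = 1 - ∫ x, (ν.rnDeriv μ x).toReal ∂μ := by
    rw [integral_sub (integrable_const 1) Measure.integrable_toReal_rnDeriv]
    simp
  have h4 : ∫ x, (ν.rnDeriv μ x).toReal ∂μ ≤ 1 := by
    rw [Measure.integral_toReal_rnDeriv' (μ := ν) (ν := μ)]
    simp only [measureReal_def, measure_univ, ENNReal.toReal_one]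
    have : 0 ≤ (ν.singularPart μ Set.univ).toReal := ENNReal.toReal_nonneg
    linarith
  linarith

/-- If a sum of functions with integrable negative parts is (a.e. equal to) an integrable
function, then each summand is integrable. -/
lemma integrable_of_ae_eq_add_sum {μ : Measure α} {ι : Type*} [Fintype ι]
    (g0 : α → ℝ) (g : ι → α → ℝ)
    (h0m : AEStronglyMeasurable g0 μ) (hgm : ∀ i, AEStronglyMeasurable (g i) μ)
    (h0n : Integrable (fun x => max (-(g0 x)) 0) μ)
    (hgn : ∀ i, Integrable (fun x => max (-(g i x)) 0) μ)
    {f : α → ℝ} (hf : Integrable f μ)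
    (hae : ∀ᵐ x ∂μ, f x = g0 x + ∑ i, g i x) :
    Integrable g0 μ ∧ ∀ i, Integrable (g i) μ := by
  classical
  have hBint : Integrable (fun x =>
      |f x| + 2 * (max (-(g0 x)) 0 + ∑ i, max (-(g i x)) 0)) μ :=
    hf.abs.add ((h0n.add (integrable_finset_sum _ fun i _ => hgn i)).const_mul 2)
  have key : ∀ᵐ x ∂μ, ∀ j : Option ι,
      ‖(Option.elim j g0 g) x‖ ≤
        |f x| + 2 * (max (-(g0 x)) 0 + ∑ i, max (-(g i x)) 0) := by
    filter_upwards [hae] with x hx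
    intro j
    have hS0 : (0:ℝ) ≤ ∑ i, max (-(g i x)) 0 :=
      Finset.sum_nonneg fun i _ => le_max_right _ _
    have h00 : (0:ℝ) ≤ max (-(g0 x)) 0 := le_max_right _ _
    have habs0 : (0:ℝ) ≤ |f x| := abs_nonneg _
    have habs : f x ≤ |f x| := le_abs_self _
    have hnegabs : -|f x| ≤ f x := neg_abs_le _
    have hg0low : -(max (-(g0 x)) 0) ≤ g0 x := by
      have := le_max_left (-(g0 x)) 0; linarith
    have hg0up : -(g0 x) ≤ max (-(g0 x)) 0 := le_max_left _ _
    have hglow : ∀ i, -(max (-(g i x)) 0) ≤ g i x := fun i => by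
      have := le_max_left (-(g i x)) 0; linarith
    have hsumlow : -(∑ i, max (-(g i x)) 0) ≤ ∑ i, g i x := by
      rw [← Finset.sum_neg_distrib]
      exact Finset.sum_le_sum fun i _ => hglow i
    cases j with
    | none =>
        simp only [Option.elim, Real.norm_eq_abs]
        rw [abs_le]
        constructor
        · linarith
        · have hxeq : g0 x = f x - ∑ i, g i x := by linarith [hx]
          linarith
    | some j =>
        simp only [Option.elim, Real.norm_eq_abs]
        rw [abs_le]
        have hj : ∑ i, g i x = g j x + ∑ i ∈ Finset.univ.erase j, g i x :=
          (Finset.add_sum_erase _ _ (Finset.mem_univ j)).symm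
        have heraselow : -(∑ i ∈ Finset.univ.erase j, max (-(g i x)) 0)
            ≤ ∑ i ∈ Finset.univ.erase j, g i x := by
          rw [← Finset.sum_neg_distrib]
          exact Finset.sum_le_sum fun i _ => hglow i
        have herasesub : ∑ i ∈ Finset.univ.erase j, max (-(g i x)) 0
            ≤ ∑ i, max (-(g i x)) 0 :=
          Finset.sum_le_sum_of_subset_of_nonneg (Finset.erase_subset _ _)
            fun i _ _ => le_max_right _ _
        have hjS : max (-(g j x)) 0 ≤ ∑ i, max (-(g i x)) 0 :=
          Finset.single_le_sum (f := fun i => max (-(g i x)) 0)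
            (fun i _ => le_max_right _ _) (Finset.mem_univ j)
        have hjlow : -(max (-(g j x)) 0) ≤ g j x := hglow j
        constructor
        · linarith
        · have hxeq : g j x = f x - g0 x - ∑ i ∈ Finset.univ.erase j, g i x := by
            rw [hx, hj]; ring
          linarith
  constructor
  · refine Integrable.mono' hBint h0m ?_
    filter_upwards [key] with x hx using hx none
  · intro j
    refine Integrable.mono' hBint (hgm j) ?_
    filter_upwards [key] with x hx using hx (some j)

/-- Chain decomposition of KL divergence against a product measure:
`KL(P‖⊗Qᵢ) = KL(P‖⊗P̄ᵢ) + ∑ᵢ KL(P̄ᵢ‖Qᵢ)`. -/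
lemma klDiv_pi_decomp {n : ℕ} {E : Fin n → Type*} [∀ i, MeasurableSpace (E i)]
    (P : Measure (∀ i, E i)) [IsProbabilityMeasure P]
    (Q : ∀ i, Measure (E i)) [∀ i, IsProbabilityMeasure (Q i)]
    (hfin : klDiv P (Measure.pi Q) ≠ ⊤) :
    klDiv P (Measure.pi Q)
      = klDiv P (Measure.pi fun i => P.map fun x => x i)
        + ∑ i, klDiv (P.map fun x => x i) (Q i) := by
  classical
  obtain ⟨hPQ, hint⟩ := klDiv_of_ne_top hfin
  set ν := Measure.pi Q with hν_def
  set Pm : ∀ i, Measure (E i) := fun i => P.map fun x => x i with hPm_def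
  haveI hPmprob : ∀ i, IsProbabilityMeasure (Pm i) := fun i =>
    Measure.isProbabilityMeasure_map (measurable_pi_apply i).aemeasurable
  set μm := Measure.pi Pm with hμm_def
  have hPmQ : ∀ i, Pm i ≪ Q i := by
    intro i
    refine Measure.AbsolutelyContinuous.mk fun s hs h0 => ?_
    rw [hPm_def, Measure.map_apply (measurable_pi_apply i) hs]
    exact hPQ (Measure.pi_eval_preimage_null Q h0)
  set g : ∀ i, E i → ℝ≥0∞ := fun i => (Pm i).rnDeriv (Q i) with hg_def
  have hgmeas : ∀ i, Measurable (g i) := fun i => Measure.measurable_rnDeriv _ _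
  set G : (∀ i, E i) → ℝ≥0∞ := fun x => ∏ i, g i (x i) with hG_def
  have hGmeas : Measurable G :=
    Finset.measurable_prod Finset.univ fun i _ =>
      (hgmeas i).comp (measurable_pi_apply i)
  have hPm_eq : ∀ i, (Q i).withDensity (g i) = Pm i := fun i =>
    Measure.withDensity_rnDeriv_eq _ _ (hPmQ i)
  haveI : ∀ i, SigmaFinite ((Q i).withDensity (g i)) := fun i => by
    rw [hPm_eq i]; infer_instance
  have hμm_eq : μm = ν.withDensity G := by
    rw [hμm_def, ← pi_withDensity Q g hgmeas]
    exact congrArg Measure.pi (funext fun i => (hPm_eq i).symm)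
  have hrn : μm.rnDeriv ν =ᵐ[ν] G := rnDeriv_pi Pm Q hPmQ
  -- P is absolutely continuous w.r.t. the product of its marginals
  have hzero : ∀ i, Pm i {y | g i y = 0} = 0 := by
    intro i
    have hpos := Measure.rnDeriv_pos (hPmQ i)
    refine measure_mono_null (fun y hy => ?_) (ae_iff.mp hpos)
    simp only [Set.mem_setOf_eq, not_lt]
    exact le_of_eq hy
  have hG0 : P {x | G x = 0} = 0 := by
    have hsub : {x | G x = 0} ⊆ ⋃ i, (fun x : ∀ i, E i => x i) ⁻¹' {y | g i y = 0} := by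
      intro x hx
      simp only [Set.mem_setOf_eq, hG_def, Finset.prod_eq_zero_iff] at hx
      obtain ⟨i, -, hi⟩ := hx
      exact Set.mem_iUnion.2 ⟨i, hi⟩
    refine measure_mono_null hsub (measure_iUnion_null fun i => ?_)
    have hmeasset : MeasurableSet {y | g i y = 0} := hgmeas i (measurableSet_singleton 0)
    rw [← Measure.map_apply (measurable_pi_apply i) hmeasset]
    exact hzero i
  have hPμm : P ≪ μm := by
    rw [hμm_eq]
    exact absolutelyContinuous_withDensity_of hGmeas hPQ hG0
  -- pointwise decomposition of the log-likelihood ratio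
  have hmul := Measure.rnDeriv_mul_rnDeriv (ν := μm) (κ := ν) hPμm
  have hpos1 : ∀ᵐ x ∂P, 0 < P.rnDeriv μm x := Measure.rnDeriv_pos hPμm
  have hfin1 : ∀ᵐ x ∂P, P.rnDeriv μm x ≠ ∞ := hPμm.ae_le (Measure.rnDeriv_ne_top P μm)
  have hgood : ∀ i, ∀ᵐ x ∂P, 0 < g i (x i) ∧ g i (x i) ≠ ∞ := by
    intro i
    have h1 : ∀ᵐ y ∂Pm i, 0 < g i y ∧ g i y ≠ ∞ :=
      (Measure.rnDeriv_pos (hPmQ i)).and ((hPmQ i).ae_le (Measure.rnDeriv_ne_top _ _))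
    have hset : MeasurableSet {y | 0 < g i y ∧ g i y ≠ ∞} :=
      (measurableSet_lt measurable_const (hgmeas i)).inter
        ((hgmeas i) (measurableSet_singleton ∞)).compl
    exact (ae_map_iff (measurable_pi_apply i).aemeasurable hset).mp h1
  have hllr : ∀ᵐ x ∂P, llr P ν x = llr P μm x + ∑ i, llr (Pm i) (Q i) (x i) := by
    filter_upwards [hPQ.ae_le hmul, hPQ.ae_le hrn, hpos1, hfin1,
      ae_all_iff.2 hgood] with x h1 h2 h3 h4 h5
    have hGx : μm.rnDeriv ν x = G x := h2
    have hxne1 : (P.rnDeriv μm x).toReal ≠ 0 :=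
      ENNReal.toReal_ne_zero.mpr ⟨h3.ne', h4⟩
    have hGne0 : G x ≠ 0 := by
      rw [hG_def]
      exact Finset.prod_ne_zero_iff.mpr fun i _ => (h5 i).1.ne'
    have hGnetop : G x ≠ ∞ := by
      rw [hG_def]
      exact (ENNReal.prod_lt_top fun i _ => (h5 i).2.lt_top).ne
    have hxne2 : (G x).toReal ≠ 0 := ENNReal.toReal_ne_zero.mpr ⟨hGne0, hGnetop⟩
    have hstep : llr P ν x = Real.log ((P.rnDeriv μm x).toReal * (G x).toReal) := by
      rw [llr, ← h1, Pi.mul_apply, hGx, ENNReal.toReal_mul]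
    rw [hstep, Real.log_mul hxne1 hxne2]
    congr 1
    rw [hG_def]
    rw [ENNReal.toReal_prod, Real.log_prod
      (fun i _ => ENNReal.toReal_ne_zero.mpr ⟨(h5 i).1.ne', (h5 i).2⟩)]
    rfl
  -- integrability of the parts
  have hmeasi : ∀ i, AEStronglyMeasurable (fun x : ∀ i, E i => llr (Pm i) (Q i) (x i)) P :=
    fun i => ((measurable_llr _ _).comp (measurable_pi_apply i)).aestronglyMeasurable
  have hnegi : ∀ i, Integrable (fun x : ∀ i, E i => max (-(llr (Pm i) (Q i) (x i))) 0) P := by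
    intro i
    have h1 := integrable_negPart_llr (Pm i) (Q i) (hPmQ i)
    exact (integrable_map_measure
      (((measurable_llr _ _).neg.max measurable_const).aestronglyMeasurable)
      (measurable_pi_apply i).aemeasurable).mp h1
  obtain ⟨hint0, hinti⟩ := integrable_of_ae_eq_add_sum (llr P μm)
    (fun i x => llr (Pm i) (Q i) (x i))
    (measurable_llr _ _).aestronglyMeasurable hmeasi
    (integrable_negPart_llr P μm hPμm) hnegi hint hllr
  have hint_i : ∀ i, Integrable (llr (Pm i) (Q i)) (Pm i) := by
    intro i
    exact (integrable_map_measure (measurable_llr _ _).aestronglyMeasurable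
      (measurable_pi_apply i).aemeasurable).mpr (hinti i)
  -- the integral identity
  have hmap_int : ∀ i, ∫ x, llr (Pm i) (Q i) (x i) ∂P
      = ∫ y, llr (Pm i) (Q i) y ∂(Pm i) := by
    intro i
    rw [hPm_def]
    exact (integral_map (measurable_pi_apply i).aemeasurable
      (measurable_llr _ _).aestronglyMeasurable).symm
  have key : ∫ x, llr P ν x ∂P
      = ∫ x, llr P μm x ∂P + ∑ i, ∫ y, llr (Pm i) (Q i) y ∂(Pm i) := by
    rw [integral_congr_ae hllr, integral_add hint0
      (integrable_finset_sum _ fun i _ => hinti i), integral_finset_sum]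
    · congr 1
      exact Finset.sum_congr rfl fun i _ => hmap_int i
    · exact fun i _ => hinti i
  -- assemble
  have hA0 : 0 ≤ ∫ x, llr P μm x ∂P := integral_llr_nonneg P μm hPμm hint0
  have hB0 : ∀ i, 0 ≤ ∫ y, llr (Pm i) (Q i) y ∂(Pm i) := fun i =>
    integral_llr_nonneg (Pm i) (Q i) (hPmQ i) (hint_i i)
  rw [klDiv_eq hPQ hint, klDiv_eq hPμm hint0, key,
    ENNReal.ofReal_add hA0 (Finset.sum_nonneg fun i _ => hB0 i),
    ENNReal.ofReal_sum_of_nonneg fun i _ => hB0 i]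
  congr 1
  exact Finset.sum_congr rfl fun i _ => (klDiv_eq (hPmQ i) (hint_i i)).symm

end Aux

/-- Three-part decomposition of the KL divergence to the standard Gaussian on
`ℝⁿ ≅ (ℝˡ)ᵏ`: inter-group mutual information, within-group mutual information, and
dimension-wise KL divergences. -/
theorem klDiv_stdGaussian_three_part_decomposition {k l : ℕ} (hk : 1 ≤ k) (hl : 1 ≤ l)
    (P : Measure (Fin k → Fin l → ℝ)) [IsProbabilityMeasure P]
    (hac : P ≪ (volume : Measure (Fin k → Fin l → ℝ)))
    (hfin : klDiv P (Measure.pi fun _ : Fin k => stdGaussian l) ≠ ⊤) :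
    klDiv P (Measure.pi fun _ : Fin k => stdGaussian l) =
      klDiv P (Measure.pi fun i => P.map fun x => x i) +
        (∑ i : Fin k, klDiv (P.map fun x => x i)
          (Measure.pi fun j => P.map fun x => x i j)) +
        ∑ i : Fin k, ∑ j : Fin l,
          klDiv (P.map fun x => x i j) (ProbabilityTheory.gaussianReal 0 1) := by
  classical
  have h1 := klDiv_pi_decomp P (fun _ : Fin k => stdGaussian l) hfin
  haveI hPm : ∀ i : Fin k, IsProbabilityMeasure (P.map fun x => x i) := fun i =>
    Measure.isProbabilityMeasure_map (measurable_pi_apply i).aemeasurable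
  have hterm : ∀ i : Fin k, klDiv (P.map fun x => x i) (stdGaussian l) ≠ ⊤ := by
    intro i htop
    apply hfin
    rw [h1, ENNReal.add_eq_top]
    right
    rw [ENNReal.sum_eq_top]
    exact ⟨i, Finset.mem_univ i, htop⟩
  have hmapmap : ∀ (i : Fin k) (j : Fin l),
      (P.map fun x => x i).map (fun y : Fin l → ℝ => y j) = P.map fun x => x i j := by
    intro i j
    rw [Measure.map_map (measurable_pi_apply j) (measurable_pi_apply i)]
    rfl
  have h2 : ∀ i : Fin k, klDiv (P.map fun x => x i) (stdGaussian l)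
      = klDiv (P.map fun x => x i) (Measure.pi fun j => P.map fun x => x i j)
        + ∑ j : Fin l, klDiv (P.map fun x => x i j)
            (ProbabilityTheory.gaussianReal 0 1) := by
    intro i
    have h := klDiv_pi_decomp (P.map fun x => x i)
      (fun _ : Fin l => ProbabilityTheory.gaussianReal 0 1) (hterm i)
    rw [show (Measure.pi fun _ : Fin l => ProbabilityTheory.gaussianReal 0 1)
        = stdGaussian l from rfl] at h
    have hpi : (Measure.pi fun j => (P.map fun x => x i).map fun y => y j)
        = Measure.pi fun j => P.map fun x => x i j :=
      congrArg Measure.pi (funext fun j => hmapmap i j)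
    rw [h, hpi]
    congr 1
    exact Finset.sum_congr rfl fun j _ => by rw [hmapmap i j]
  rw [h1, Finset.sum_congr rfl fun i _ => h2 i, Finset.sum_add_distrib, ← add_assoc]
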